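/- Let C be a choice function on the integer box B (i.e., C : B → B with C(z) ≤ z for all z ∈ B) satisfying (A1) consistency and (A2) substitutability. Then C is stationary: for all z, z' ∈ B one has C(z ∨ z') = C(C(z) ∨ z'). -/
import Mathlib

namespace SGMMStmt

variable {E : Type*} [Fintype E] [DecidableEq E]

/-- Membership in the integer box `B = {z : E → ℕ | z e ≤ b e for all e}`. -/
def inBox (b z : E → ℕ) : Prop := ∀ e, z e ≤ b e

/-- A choice function on the integer box satisfying (A1) consistency and
(A2) substitutability is stationary: `C (z ⊔ z') = C (C z ⊔ z')`. -/
theorem statement0 (b : E → ℕ) (C : (E → ℕ) → (E → ℕ))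
    (hC : ∀ z, inBox b z → C z ≤ z)
    (hA1 : ∀ z z' : E → ℕ, inBox b z → z' ≤ z → C z ≤ z' → C z' = C z)
    (hA2 : ∀ z z' : E → ℕ, inBox b z → z' ≤ z → C z ⊓ z' ≤ C z')
    (z z' : E → ℕ) (hz : inBox b z) (hz' : inBox b z') :
    C (z ⊔ z') = C (C z ⊔ z') := by
  have hw : inBox b (z ⊔ z') := fun e => max_le (hz e) (hz' e)
  have hle : z ≤ z ⊔ z' := le_sup_left
  have h2 := hA2 (z ⊔ z') z hw hle
  have hCw := hC _ hw
  have hsub : C (z ⊔ z') ≤ C z ⊔ z' := by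
    intro e
    rcases le_or_gt (C (z ⊔ z') e) (z' e) with h | h
    · simp only [Pi.sup_apply]; omega
    · have hze : C (z ⊔ z') e ≤ z e := by
        have := hCw e
        simp only [Pi.sup_apply, sup_le_iff] at this ⊢
        omega
      have : C (z ⊔ z') e ≤ C z e := by
        have h2e := h2 e
        simpa [hze] using h2e
      simp only [Pi.sup_apply]; omega
  have hle' : C z ⊔ z' ≤ z ⊔ z' := sup_le_sup_right (hC z hz) z'
  exact (hA1 (z ⊔ z') (C z ⊔ z') hw hle' hsub).symm

end SGMMStmt
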